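/- arXiv:2001.02335 — 2 statements merged into one kernel-verified Lean document; each statement's English description precedes it below -/
import Mathlib

section
/- Let A be a 2×2 real symmetric positive definite matrix and let k₀ ≥ 2 be an integer. Let g : ℕ → ℝ² and α : ℕ → ℝ satisfy g_{j+1} = (I − α_j A)g_j for all j, with the BB2 stepsize α_j = ⟨g_{j-1}, A g_{j-1}⟩/⟨g_{j-1}, A² g_{j-1}⟩ for every j with 1 ≤ j ≤ k₀+2 and j ≠ k₀ (α₀ arbitrary). Suppose g_j ≠ 0 for all 0 ≤ j ≤ k₀+2, and let q ∈ ℝ², q ≠ 0, satisfy (I − α_{k₀-2} A)q = g_{k₀-2}. Define α̂ = ⟨q, Aq⟩/⟨q, A²q⟩, α^{MG} = ⟨g_{k₀}, A g_{k₀}⟩/⟨g_{k₀}, A² g_{k₀}⟩, Γ = 4⟨q, A² g_{k₀}⟩²/(⟨q, Aq⟩·⟨g_{k₀}, A g_{k₀}⟩), and set α_{k₀} = 2/( 1/α̂ + 1/α^{MG} + √( (1/α̂ − 1/α^{MG})² + Γ ) ). Then g_{k₀+3} = 0. -/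
open Matrix

private lemma dot2 (x y : Fin 2 → ℝ) : x ⬝ᵥ y = x 0 * y 0 + x 1 * y 1 := by
  simp [dotProduct, Fin.sum_univ_two]

private lemma mv0 (A : Matrix (Fin 2) (Fin 2) ℝ) (x : Fin 2 → ℝ) :
    (A *ᵥ x) 0 = A 0 0 * x 0 + A 0 1 * x 1 := by
  simp [mulVec, dotProduct, Fin.sum_univ_two]

private lemma mv1 (A : Matrix (Fin 2) (Fin 2) ℝ) (x : Fin 2 → ℝ) :
    (A *ᵥ x) 1 = A 1 0 * x 0 + A 1 1 * x 1 := by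
  simp [mulVec, dotProduct, Fin.sum_univ_two]

private lemma vec_ne_zero {x : Fin 2 → ℝ} (hx : x ≠ 0) : x 0 ≠ 0 ∨ x 1 ≠ 0 := by
  by_contra h
  push_neg at h
  exact hx (by funext i; fin_cases i <;> simp [h.1, h.2])

private lemma dotself_pos {x : Fin 2 → ℝ} (hx : x ≠ 0) : 0 < x ⬝ᵥ x := by
  rw [dot2]
  rcases vec_ne_zero hx with h | h
  · nlinarith [mul_self_pos.mpr h, mul_self_nonneg (x 1)]
  · nlinarith [mul_self_pos.mpr h, mul_self_nonneg (x 0)]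

private lemma parallel_of_cross {G y : Fin 2 → ℝ} (hG : G ≠ 0)
    (hy : y 0 ≠ 0 ∨ y 1 ≠ 0) (hcross : G 0 * y 1 - G 1 * y 0 = 0) :
    ∃ s : ℝ, s ≠ 0 ∧ G 0 = s * y 0 ∧ G 1 = s * y 1 := by
  have hGne : G 0 ≠ 0 ∨ G 1 ≠ 0 := vec_ne_zero hG
  rcases hy with h | h
  · refine ⟨G 0 / y 0, ?_, by field_simp, ?_⟩
    · intro hs
      have h0 : G 0 = 0 := by field_simp at hs; simpa using hs
      have h1 : G 1 = 0 := by
        have : G 1 * y 0 = 0 := by linear_combination y 1 * h0 - hcross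
        rcases mul_eq_zero.mp this with h' | h'
        · exact h'
        · exact absurd h' h
      rcases hGne with hg | hg
      · exact hg h0
      · exact hg h1
    · field_simp
      linarith [hcross]
  · refine ⟨G 1 / y 1, ?_, ?_, by field_simp⟩
    · intro hs
      have h1 : G 1 = 0 := by field_simp at hs; simpa using hs
      have h0 : G 0 = 0 := by
        have : G 0 * y 1 = 0 := by linear_combination y 0 * h1 + hcross
        rcases mul_eq_zero.mp this with h' | h'
        · exact h'
        · exact absurd h' h
      rcases hGne with hg | hg
      · exact hg h0
      · exact hg h1
    · field_simp
      linarith [hcross]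

private lemma prim (u v S W al : ℝ) (hS2 : S^2 = (u-v)^2 + 4*W) (hT : u+v+S ≠ 0)
    (hal : al = 2/(u+v+S)) : (1 - al*u)*(1 - al*v) = al^2 * W := by
  rw [hal]
  have ht : 2/(u+v+S)*(u+v+S) = 2 := div_mul_cancel₀ 2 hT
  set t := 2/(u+v+S)
  linear_combination (t^2/4) * hS2 - ((t*S+2-t*(u+v))/4) * ht

private lemma star_eq (Q1 Q2 Gd1 Gd2 X al : ℝ) (hQ1 : 0 < Q1) (hQ2 : 0 < Q2)
    (hG1 : 0 < Gd1) (hG2 : 0 < Gd2)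
    (hal : al = 2 / (Q2/Q1 + Gd2/Gd1 +
      Real.sqrt ((Q2/Q1 - Gd2/Gd1)^2 + 4*X^2/(Q1*Gd1)))) :
    (Q1 - al*Q2) * (Gd1 - al*Gd2) = al^2 * X^2 := by
  set u := Q2/Q1 with hu
  set v := Gd2/Gd1 with hv
  have hupos : 0 < u := div_pos hQ2 hQ1
  have hvpos : 0 < v := div_pos hG2 hG1
  set S := Real.sqrt ((u - v)^2 + 4*X^2/(Q1*Gd1)) with hSdef
  have hSnn : 0 ≤ S := Real.sqrt_nonneg _
  have harg : 0 ≤ (u - v)^2 + 4*X^2/(Q1*Gd1) := by positivity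
  have hS2 : S^2 = (u-v)^2 + 4*(X^2/(Q1*Gd1)) := by
    rw [Real.sq_sqrt harg]; ring
  have hTne : u + v + S ≠ 0 := by positivity
  have hkey := prim u v S (X^2/(Q1*Gd1)) al hS2 hTne hal
  have hQ2u : Q2 = u * Q1 := by rw [hu]; field_simp
  have hG2v : Gd2 = v * Gd1 := by rw [hv]; field_simp
  have hQ1ne := ne_of_gt hQ1
  have hG1ne := ne_of_gt hG1
  calc (Q1 - al*Q2) * (Gd1 - al*Gd2) = Q1 * Gd1 * ((1 - al*u)*(1 - al*v)) := by
        rw [hQ2u, hG2v]; ring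
    _ = Q1 * Gd1 * (al^2 * (X^2/(Q1*Gd1))) := by rw [hkey]
    _ = al^2 * X^2 := by field_simp

/-- Theorem 1 specialized to `Ψ(A) = A` (the BB2 method) with the inserted
stepsize `α̃_{k₀}^{BB2}` of (newsbb2): finite termination `g_{k₀+3} = 0`. -/
theorem finite_termination_BB2 {A : Matrix (Fin 2) (Fin 2) ℝ}
    (hA : A.PosDef) (k₀ : ℕ) (hk₀ : 2 ≤ k₀)
    (g : ℕ → Fin 2 → ℝ) (α : ℕ → ℝ)
    (hrec : ∀ j, g (j + 1) = g j - α j • (A *ᵥ g j))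
    (hstep : ∀ j, 1 ≤ j → j ≤ k₀ + 2 → j ≠ k₀ →
      α j = (g (j - 1) ⬝ᵥ (A *ᵥ g (j - 1))) /
        (g (j - 1) ⬝ᵥ (A *ᵥ (A *ᵥ g (j - 1)))))
    (hgne : ∀ j, j ≤ k₀ + 2 → g j ≠ 0)
    (q : Fin 2 → ℝ) (hq0 : q ≠ 0)
    (hq : q - α (k₀ - 2) • (A *ᵥ q) = g (k₀ - 2))
    (αhat αMG Γ : ℝ)
    (hαhat : αhat = (q ⬝ᵥ (A *ᵥ q)) / (q ⬝ᵥ (A *ᵥ (A *ᵥ q))))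
    (hαMG : αMG = (g k₀ ⬝ᵥ (A *ᵥ g k₀)) / (g k₀ ⬝ᵥ (A *ᵥ (A *ᵥ g k₀))))
    (hΓ : Γ = 4 * (q ⬝ᵥ (A *ᵥ (A *ᵥ g k₀))) ^ 2 /
      ((q ⬝ᵥ (A *ᵥ q)) * (g k₀ ⬝ᵥ (A *ᵥ g k₀))))
    (hαk₀ : α k₀ = 2 /
      (1 / αhat + 1 / αMG + Real.sqrt ((1 / αhat - 1 / αMG) ^ 2 + Γ))) :
    g (k₀ + 3) = 0 := by
  obtain ⟨k, rfl⟩ : ∃ k, k₀ = k + 2 := ⟨k₀ - 2, by omega⟩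
  clear hk₀
  have hsym : A 1 0 = A 0 1 := by simpa using hA.1.apply 0 1
  -- basic positivity facts
  have hpos1 : ∀ x : Fin 2 → ℝ, x ≠ 0 → 0 < x ⬝ᵥ (A *ᵥ x) := fun x hx => by
    simpa using hA.dotProduct_mulVec_pos hx
  have hAne : ∀ x : Fin 2 → ℝ, x ≠ 0 → A *ᵥ x ≠ 0 := by
    intro x hx h
    have h2 := hpos1 x hx
    rw [h] at h2
    simp at h2
  have hsymdot : ∀ x : Fin 2 → ℝ, x ⬝ᵥ (A *ᵥ (A *ᵥ x)) = (A *ᵥ x) ⬝ᵥ (A *ᵥ x) := by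
    intro x; simp only [dot2, mv0, mv1, hsym]; ring
  have hpos2 : ∀ x : Fin 2 → ℝ, x ≠ 0 → 0 < x ⬝ᵥ (A *ᵥ (A *ᵥ x)) := fun x hx => by
    rw [hsymdot]; exact dotself_pos (hAne x hx)
  -- names
  simp only [Nat.add_sub_cancel] at hq
  set μ := α k with hμdef
  set p := g k with hpdef
  set r := g (k + 1) with hrdef
  set G := g (k + 2) with hGdef
  have hp0 : p ≠ 0 := hgne k (by omega)
  have hG0 : G ≠ 0 := hgne (k + 2) (by omega)
  have hrp : r = p - μ • (A *ᵥ p) := hrec k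
  have hβ : α (k + 1) = (p ⬝ᵥ (A *ᵥ p)) / (p ⬝ᵥ (A *ᵥ (A *ᵥ p))) := by
    have h := hstep (k + 1) (by omega) (by omega) (by omega)
    simpa using h
  have hGr : G = r - ((p ⬝ᵥ (A *ᵥ p)) / (p ⬝ᵥ (A *ᵥ (A *ᵥ p)))) • (A *ᵥ r) := by
    rw [← hβ]; exact hrec (k + 1)
  set N := p ⬝ᵥ (A *ᵥ p) with hNdef
  set D := p ⬝ᵥ (A *ᵥ (A *ᵥ p)) with hDdef
  have hDpos : 0 < D := hpos2 p hp0
  -- component equations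
  have hpc0 : p 0 = q 0 - μ * (A 0 0 * q 0 + A 0 1 * q 1) := by
    rw [← hq]; simp [mv0]
  have hpc1 : p 1 = q 1 - μ * (A 0 1 * q 0 + A 1 1 * q 1) := by
    rw [← hq]; simp [mv1, hsym]
  have hrc0 : r 0 = p 0 - μ * (A 0 0 * p 0 + A 0 1 * p 1) := by
    rw [hrp]; simp [mv0]
  have hrc1 : r 1 = p 1 - μ * (A 0 1 * p 0 + A 1 1 * p 1) := by
    rw [hrp]; simp [mv1, hsym]
  -- Step 1: orthogonality ⟨G, Aq⟩ = 0
  have claim1 : r ⬝ᵥ (A *ᵥ q) = N := by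
    simp only [hNdef, dot2, mv0, mv1, hsym, hrc0, hrc1, hpc0, hpc1]; ring
  have claim2 : (A *ᵥ r) ⬝ᵥ (A *ᵥ q) = D := by
    simp only [hDdef, dot2, mv0, mv1, hsym, hrc0, hrc1, hpc0, hpc1]; ring
  have horth : G ⬝ᵥ (A *ᵥ q) = 0 := by
    have hGc : ∀ i, G i = r i - (N / D) * (A *ᵥ r) i := by
      intro i; rw [hGr]; simp only [Pi.sub_apply, Pi.smul_apply, smul_eq_mul]
    have e : G ⬝ᵥ (A *ᵥ q) = r ⬝ᵥ (A *ᵥ q) - (N / D) * ((A *ᵥ r) ⬝ᵥ (A *ᵥ q)) := by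
      simp only [dot2, hGc]; ring
    rw [e, claim1, claim2]
    rw [div_mul_cancel₀ N (ne_of_gt hDpos), sub_self]
  -- Step 2: G = s • (rotation of A q)
  set y : Fin 2 → ℝ := ![(A *ᵥ q) 1, -((A *ᵥ q) 0)] with hydef
  have hy0 : y 0 = A 0 1 * q 0 + A 1 1 * q 1 := by simp [hydef, mv1, hsym]
  have hy1 : y 1 = -(A 0 0 * q 0 + A 0 1 * q 1) := by simp [hydef, mv0]
  have hcross : G 0 * y 1 - G 1 * y 0 = 0 := by
    have h := horth
    simp only [dot2, hydef] at h ⊢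
    simp only [Matrix.cons_val_zero, Matrix.cons_val_one, Matrix.head_cons]
    linarith [h]
  have hyne : y 0 ≠ 0 ∨ y 1 ≠ 0 := by
    have := vec_ne_zero (hAne q hq0)
    rcases this with h | h
    · right; simp only [hydef, Matrix.cons_val_one, Matrix.head_cons, Matrix.cons_val_zero, ne_eq, neg_eq_zero]; exact h
    · left; simp only [hydef, Matrix.cons_val_zero]; exact h
  obtain ⟨s, hs0, hsG0, hsG1⟩ := parallel_of_cross hG0 hyne hcross
  -- Step 3: the key product identity (★) for the inserted stepsize
  have hQ1pos := hpos1 q hq0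
  have hQ2pos := hpos2 q hq0
  have hGd1pos := hpos1 G hG0
  have hGd2pos := hpos2 G hG0
  have hal : α (k + 2) = 2 / ((q ⬝ᵥ (A *ᵥ (A *ᵥ q))) / (q ⬝ᵥ (A *ᵥ q)) +
      (G ⬝ᵥ (A *ᵥ (A *ᵥ G))) / (G ⬝ᵥ (A *ᵥ G)) +
      Real.sqrt (((q ⬝ᵥ (A *ᵥ (A *ᵥ q))) / (q ⬝ᵥ (A *ᵥ q)) -
        (G ⬝ᵥ (A *ᵥ (A *ᵥ G))) / (G ⬝ᵥ (A *ᵥ G))) ^ 2 +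
        4 * (q ⬝ᵥ (A *ᵥ (A *ᵥ G))) ^ 2 / ((q ⬝ᵥ (A *ᵥ q)) * (G ⬝ᵥ (A *ᵥ G))))) := by
    rw [hαk₀, hαhat, hαMG, hΓ, one_div_div, one_div_div]
  have hstar := star_eq (q ⬝ᵥ (A *ᵥ q)) (q ⬝ᵥ (A *ᵥ (A *ᵥ q)))
    (G ⬝ᵥ (A *ᵥ G)) (G ⬝ᵥ (A *ᵥ (A *ᵥ G))) (q ⬝ᵥ (A *ᵥ (A *ᵥ G))) (α (k + 2))
    hQ1pos hQ2pos hGd1pos hGd2pos hal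
  -- Step 4: deduce det(I - α A) = 0
  set al := α (k + 2) with haldef
  have hdd : A.det * ((1 - al * A 0 0) * (1 - al * A 1 1) - al^2 * (A 0 1)^2) *
      (q ⬝ᵥ (A *ᵥ q))^2 * s^2 = 0 := by
    have h := hstar
    simp only [dot2, mv0, mv1, hsym] at h
    rw [hsG0, hsG1, hy0, hy1] at h
    simp only [det_fin_two, hsym, dot2, mv0, mv1]
    linear_combination h
  have hdet : (0:ℝ) < A.det := hA.det_pos
  have hδ : (1 - al * A 0 0) * (1 - al * A 1 1) - al^2 * (A 0 1)^2 = 0 := by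
    by_contra hne
    exact (mul_ne_zero (mul_ne_zero (mul_ne_zero (ne_of_gt hdet) hne)
      (pow_ne_zero 2 (ne_of_gt hQ1pos))) (pow_ne_zero 2 hs0)) hdd
  -- al > 0
  have halpos : 0 < al := by
    rw [hal]
    have h1 : 0 < (q ⬝ᵥ (A *ᵥ (A *ᵥ q))) / (q ⬝ᵥ (A *ᵥ q)) := div_pos hQ2pos hQ1pos
    have h2 : 0 < (G ⬝ᵥ (A *ᵥ (A *ᵥ G))) / (G ⬝ᵥ (A *ᵥ G)) := div_pos hGd2pos hGd1pos
    have h3 := Real.sqrt_nonneg (((q ⬝ᵥ (A *ᵥ (A *ᵥ q))) / (q ⬝ᵥ (A *ᵥ q)) -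
        (G ⬝ᵥ (A *ᵥ (A *ᵥ G))) / (G ⬝ᵥ (A *ᵥ G))) ^ 2 +
        4 * (q ⬝ᵥ (A *ᵥ (A *ᵥ G))) ^ 2 / ((q ⬝ᵥ (A *ᵥ q)) * (G ⬝ᵥ (A *ᵥ G))))
    positivity
  have halne : al ≠ 0 := ne_of_gt halpos
  clear_value al
  -- Step 5: w = g (k+3) is an eigenvector of A
  set w := g (k + 3) with hwdef
  have hwne : w ≠ 0 := hgne (k + 3) (by omega)
  have hw : w = G - al • (A *ᵥ G) := by
    have h := hrec (k + 2)
    rwa [show k + 2 + 1 = k + 3 by omega, ← haldef] at h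
  have hwc0 : w 0 = G 0 - al * (A 0 0 * G 0 + A 0 1 * G 1) := by
    rw [hw]; simp [mv0]
  have hwc1 : w 1 = G 1 - al * (A 0 1 * G 0 + A 1 1 * G 1) := by
    rw [hw]; simp [mv1, hsym]
  set lam := (al * (A 0 0 + A 1 1) - 1) / al with hlamdef
  have hAw : A *ᵥ w = lam • w := by
    have h0 : al * ((A *ᵥ w) 0) = (al * (A 0 0 + A 1 1) - 1) * w 0 := by
      simp only [mv0, hsym, hwc0, hwc1]
      linear_combination (G 0) * hδ
    have h1 : al * ((A *ᵥ w) 1) = (al * (A 0 0 + A 1 1) - 1) * w 1 := by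
      simp only [mv1, hsym, hwc0, hwc1]
      linear_combination (G 1) * hδ
    funext i
    fin_cases i
    · show (A *ᵥ w) 0 = lam * w 0
      rw [hlamdef]
      field_simp
      linarith [h0]
    · show (A *ᵥ w) 1 = lam * w 1
      rw [hlamdef]
      field_simp
      linarith [h1]
  have hwAw : w ⬝ᵥ (A *ᵥ w) = lam * (w ⬝ᵥ w) := by
    rw [hAw]; simp only [dot2, Pi.smul_apply, smul_eq_mul]; ring
  have hlampos : 0 < lam := by
    have h1 := hpos1 w hwne
    have h2 := dotself_pos hwne
    rw [hwAw] at h1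
    rcases mul_pos_iff.mp h1 with ⟨ha, _⟩ | ⟨_, hb⟩
    · exact ha
    · linarith
  have hlamne : lam ≠ 0 := ne_of_gt hlampos
  clear_value lam
  -- Step 6: α (k+4) = 1/lam
  have hA2w : A *ᵥ (A *ᵥ w) = (lam * lam) • w := by
    rw [hAw, mulVec_smul, hAw, smul_smul]
  have hwA2w : w ⬝ᵥ (A *ᵥ (A *ᵥ w)) = (lam * lam) * (w ⬝ᵥ w) := by
    rw [hA2w]; simp only [dot2, Pi.smul_apply, smul_eq_mul]; ring
  have hαk4 : α (k + 4) = 1 / lam := by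
    have h := hstep (k + 4) (by omega) (by omega) (by omega)
    rw [show k + 4 - 1 = k + 3 by omega] at h
    rw [h, ← hwdef, hwAw, hwA2w]
    have h2 := ne_of_gt (dotself_pos hwne)
    rw [div_eq_div_iff (by exact mul_ne_zero (mul_ne_zero hlamne hlamne) h2) hlamne]
    ring
  -- Step 7: conclusion
  have h4 : g (k + 4) = w - α (k + 3) • (A *ᵥ w) := by
    have h := hrec (k + 3)
    rwa [show k + 3 + 1 = k + 4 by omega] at h
  have h4c : g (k + 4) = (1 - α (k + 3) * lam) • w := by
    rw [h4, hAw, smul_smul]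
    funext i
    simp only [Pi.sub_apply, Pi.smul_apply, smul_eq_mul]
    ring
  have h6 : A *ᵥ g (k + 4) = ((1 - α (k + 3) * lam) * lam) • w := by
    rw [h4c, mulVec_smul, hAw, smul_smul]
  have h5 : g (k + 5) = g (k + 4) - α (k + 4) • (A *ᵥ g (k + 4)) := by
    have h := hrec (k + 4)
    rwa [show k + 4 + 1 = k + 5 by omega] at h
  rw [show k + 2 + 3 = k + 5 by omega, h5, hαk4, h6, h4c, smul_smul]
  have : 1 / lam * ((1 - α (k + 3) * lam) * lam) = 1 - α (k + 3) * lam := by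
    field_simp
  rw [this, sub_self]
end

section
/- Let A be a 2×2 real symmetric positive definite matrix and let k₀ ≥ 2 be an integer. For each j with 1 ≤ j ≤ k₀+2 and j ≠ k₀, let M_j be a 2×2 real symmetric positive definite matrix with M_j A = A M_j, and write M = M_{k₀-1}. Let g : ℕ → ℝ² and α : ℕ → ℝ satisfy g_{j+1} = (I − α_j A)g_j for all j, with α_j = ⟨g_{j-1}, M_j g_{j-1}⟩/⟨g_{j-1}, M_j A g_{j-1}⟩ for every j with 1 ≤ j ≤ k₀+2 and j ≠ k₀ (α₀ arbitrary). Suppose g_j ≠ 0 for all 0 ≤ j ≤ k₀+2, and let q ∈ ℝ², q ≠ 0, satisfy (I − α_{k₀-2} A)q = g_{k₀-2}. Define H₁₁ = ⟨Mq, A(Mq)⟩/‖Mq‖², H₁₂ = ⟨Mq, A g_{k₀}⟩/(‖Mq‖·‖g_{k₀}‖), H₂₂ = ⟨g_{k₀}, A g_{k₀}⟩/‖g_{k₀}‖², and set α_{k₀} = 2/((H₁₁+H₂₂) + √((H₁₁−H₂₂)² + 4H₁₂²)). Then g_{k₀+3} = 0. -/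
set_option maxHeartbeats 1000000


open Matrix

lemma symdot {S : Matrix (Fin 2) (Fin 2) ℝ} (h : Sᵀ = S) (x y : Fin 2 → ℝ) :
    (S *ᵥ x) ⬝ᵥ y = x ⬝ᵥ (S *ᵥ y) := by
  nth_rewrite 1 [← h]
  rw [mulVec_transpose, ← dotProduct_mulVec]

lemma pd_dot {M : Matrix (Fin 2) (Fin 2) ℝ} (hM : M.PosDef) {x : Fin 2 → ℝ} (hx : x ≠ 0) :
    0 < x ⬝ᵥ (M *ᵥ x) := by simpa using hM.dotProduct_mulVec_pos hx

lemma pd_entries {M : Matrix (Fin 2) (Fin 2) ℝ} (hM : M.PosDef) :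
    M 1 0 = M 0 1 ∧ 0 < M 0 0 ∧ 0 < M 1 1 ∧ M 0 1 ^ 2 < M 0 0 * M 1 1 := by
  have hsym : Mᵀ = M := hM.1
  have h10 : M 1 0 = M 0 1 := by
    have := congrFun (congrFun hsym 0) 1
    simpa [Matrix.transpose] using this
  have h00 : 0 < M 0 0 := by
    have := pd_dot hM (x := ![1, 0]) (by
      intro h; have := congrFun h 0; simp at this)
    simpa [Matrix.mulVec, dotProduct, Fin.sum_univ_two] using this
  have h11 : 0 < M 1 1 := by
    have := pd_dot hM (x := ![0, 1]) (by
      intro h; have := congrFun h 1; simp at this)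
    simpa [Matrix.mulVec, dotProduct, Fin.sum_univ_two] using this
  have hdet : 0 < M.det := hM.det_pos
  rw [Matrix.det_fin_two] at hdet
  rw [h10] at hdet
  refine ⟨h10, h00, h11, by nlinarith⟩

lemma pd_prod_dot {M A : Matrix (Fin 2) (Fin 2) ℝ} (hM : M.PosDef) (hA : A.PosDef)
    (hC : M * A = A * M) {x : Fin 2 → ℝ} (hx : x ≠ 0) :
    x ⬝ᵥ (M *ᵥ (A *ᵥ x)) ≠ 0 := by
  obtain ⟨hm10, hm00, hm11, hmdet⟩ := pd_entries hM
  obtain ⟨ha10, ha00, ha11, hadet⟩ := pd_entries hA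
  have hc : M 0 0 * A 0 1 + M 0 1 * A 1 1 = A 0 0 * M 0 1 + A 0 1 * M 1 1 := by
    have := congrFun (congrFun hC 0) 1
    simpa [Matrix.mul_apply, Fin.sum_univ_two, hm10, ha10] using this
  have hcoeff : x ⬝ᵥ (M *ᵥ (A *ᵥ x)) =
      (M 0 0 * A 0 0 + M 0 1 * A 0 1) * x 0 ^ 2 +
      (2 * (M 0 0 * A 0 1 + M 0 1 * A 1 1)) * (x 0 * x 1) +
      (M 0 1 * A 0 1 + M 1 1 * A 1 1) * x 1 ^ 2 := by
    simp only [Matrix.mulVec, dotProduct, Fin.sum_univ_two, hm10, ha10]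
    ring_nf
    linear_combination (-(x 0 * x 1)) * hc
  have key : (M 0 0 * A 0 0 + M 0 1 * A 0 1) * (M 0 1 * A 0 1 + M 1 1 * A 1 1)
      - (M 0 0 * A 0 1 + M 0 1 * A 1 1) * (A 0 0 * M 0 1 + A 0 1 * M 1 1) =
      (M 0 0 * M 1 1 - M 0 1 ^ 2) * (A 0 0 * A 1 1 - A 0 1 ^ 2) := by ring
  rw [← hc] at key
  have hdetS : (M 0 0 * A 0 1 + M 0 1 * A 1 1) ^ 2 <
      (M 0 0 * A 0 0 + M 0 1 * A 0 1) * (M 0 1 * A 0 1 + M 1 1 * A 1 1) := by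
    nlinarith [mul_pos (sub_pos.mpr hmdet) (sub_pos.mpr hadet)]
  intro hzero
  rw [hcoeff] at hzero
  have hx01 : ¬(x 0 = 0 ∧ x 1 = 0) := by
    simpa [funext_iff, Fin.forall_fin_two] using hx
  have h1 : x 1 = 0 := by
    by_contra hx1
    have hiden : ((M 0 0 * A 0 0 + M 0 1 * A 0 1) * x 0 + (M 0 0 * A 0 1 + M 0 1 * A 1 1) * x 1) ^ 2
        + ((M 0 0 * A 0 0 + M 0 1 * A 0 1) * (M 0 1 * A 0 1 + M 1 1 * A 1 1)
            - (M 0 0 * A 0 1 + M 0 1 * A 1 1) ^ 2) * x 1 ^ 2 = 0 := by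
      linear_combination (M 0 0 * A 0 0 + M 0 1 * A 0 1) * hzero
    nlinarith [sq_nonneg ((M 0 0 * A 0 0 + M 0 1 * A 0 1) * x 0 + (M 0 0 * A 0 1 + M 0 1 * A 1 1) * x 1),
      mul_pos (sub_pos.mpr hdetS) (pow_two_pos_of_ne_zero hx1)]
  have hs0 : (M 0 0 * A 0 0 + M 0 1 * A 0 1) ≠ 0 := by
    intro h; rw [h] at hdetS; nlinarith [sq_nonneg (M 0 0 * A 0 1 + M 0 1 * A 1 1)]
  have h0 : x 0 = 0 := by
    rw [h1] at hzero
    have : (M 0 0 * A 0 0 + M 0 1 * A 0 1) * x 0 ^ 2 = 0 := by linear_combination hzero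
    rcases mul_eq_zero.mp this with h | h
    · exact absurd h hs0
    · exact pow_eq_zero_iff (n := 2) (by norm_num) |>.mp h
  exact hx01 ⟨h0, h1⟩

lemma ortho_aux {A B : Matrix (Fin 2) (Fin 2) ℝ} (hAs : Aᵀ = A) (hBs : Bᵀ = B)
    (hC : B * A = A * B) (q gn : Fin 2 → ℝ) (a b : ℝ) (hgn : q - b • (A *ᵥ q) = gn) :
    (B *ᵥ q) ⬝ᵥ ((gn - b • (A *ᵥ gn)) - a • (A *ᵥ (gn - b • (A *ᵥ gn)))) =
      (gn ⬝ᵥ (B *ᵥ gn)) - a * (gn ⬝ᵥ (B *ᵥ (A *ᵥ gn))) := by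
  subst hgn
  have hcomm : ∀ y : Fin 2 → ℝ, B *ᵥ (A *ᵥ y) = A *ᵥ (B *ᵥ y) := fun y => by
    rw [mulVec_mulVec, mulVec_mulVec, hC]
  simp only [mulVec_sub, mulVec_smul, hcomm, dotProduct_sub, sub_dotProduct,
    dotProduct_smul, smul_dotProduct, smul_eq_mul, symdot hAs, symdot hBs]

lemma hsum_aux (a b c u0 u1 v0 v1 : ℝ) (hp : u0 * v0 + u1 * v1 = 0) :
    (a * u0 ^ 2 + 2 * b * u0 * u1 + c * u1 ^ 2) * (v0 ^ 2 + v1 ^ 2) +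
      (a * v0 ^ 2 + 2 * b * v0 * v1 + c * v1 ^ 2) * (u0 ^ 2 + u1 ^ 2) =
      (a + c) * ((u0 ^ 2 + u1 ^ 2) * (v0 ^ 2 + v1 ^ 2)) := by
  linear_combination ((a - c) * (u0 * v0 - u1 * v1) + 2 * b * (u0 * v1 + u1 * v0)) * hp

lemma hdet_aux (a b c u0 u1 v0 v1 : ℝ) (hp : u0 * v0 + u1 * v1 = 0) :
    (a * u0 ^ 2 + 2 * b * u0 * u1 + c * u1 ^ 2) * (a * v0 ^ 2 + 2 * b * v0 * v1 + c * v1 ^ 2) -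
      (a * u0 * v0 + b * (u0 * v1 + u1 * v0) + c * u1 * v1) ^ 2 =
      (a * c - b ^ 2) * ((u0 ^ 2 + u1 ^ 2) * (v0 ^ 2 + v1 ^ 2)) := by
  linear_combination (-(a * c - b ^ 2) * (u0 * v0 + u1 * v1)) * hp

/-- Theorem 2 (generalized finite termination with varying `Ψ`), instance `r = 1`:
each iteration `j ≠ k₀` may use a different symmetric positive definite matrix
`M j` commuting with `A`; inserting the new stepsize built from `M (k₀ - 1)`
at iteration `k₀` gives `g_{k₀+3} = 0`. -/
theorem generalized_finite_termination {A : Matrix (Fin 2) (Fin 2) ℝ}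
    (hA : A.PosDef) (k₀ : ℕ) (hk₀ : 2 ≤ k₀)
    (M : ℕ → Matrix (Fin 2) (Fin 2) ℝ)
    (hM : ∀ j, 1 ≤ j → j ≤ k₀ + 2 → j ≠ k₀ →
      (M j).PosDef ∧ M j * A = A * M j)
    (g : ℕ → Fin 2 → ℝ) (α : ℕ → ℝ)
    (hrec : ∀ j, g (j + 1) = g j - α j • (A *ᵥ g j))
    (hstep : ∀ j, 1 ≤ j → j ≤ k₀ + 2 → j ≠ k₀ →
      α j = (g (j - 1) ⬝ᵥ (M j *ᵥ g (j - 1))) /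
        (g (j - 1) ⬝ᵥ (M j *ᵥ (A *ᵥ g (j - 1)))))
    (hgne : ∀ j, j ≤ k₀ + 2 → g j ≠ 0)
    (q : Fin 2 → ℝ) (hq0 : q ≠ 0)
    (hq : q - α (k₀ - 2) • (A *ᵥ q) = g (k₀ - 2))
    (H₁₁ H₁₂ H₂₂ : ℝ)
    (hH₁₁ : H₁₁ = ((M (k₀ - 1) *ᵥ q) ⬝ᵥ (A *ᵥ (M (k₀ - 1) *ᵥ q))) /
      ((M (k₀ - 1) *ᵥ q) ⬝ᵥ (M (k₀ - 1) *ᵥ q)))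
    (hH₁₂ : H₁₂ = ((M (k₀ - 1) *ᵥ q) ⬝ᵥ (A *ᵥ g k₀)) /
      (Real.sqrt ((M (k₀ - 1) *ᵥ q) ⬝ᵥ (M (k₀ - 1) *ᵥ q)) *
        Real.sqrt (g k₀ ⬝ᵥ g k₀)))
    (hH₂₂ : H₂₂ = (g k₀ ⬝ᵥ (A *ᵥ g k₀)) / (g k₀ ⬝ᵥ g k₀))
    (hαk₀ : α k₀ = 2 / ((H₁₁ + H₂₂) + Real.sqrt ((H₁₁ - H₂₂) ^ 2 + 4 * H₁₂ ^ 2))) :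
    g (k₀ + 3) = 0 := by
  obtain ⟨n, rfl⟩ : ∃ n, k₀ = n + 2 := ⟨k₀ - 2, by omega⟩
  have hi1 : n + 2 - 1 = n + 1 := by omega
  have hi2 : n + 2 - 2 = n := by omega
  rw [hi2] at hq
  rw [hi1] at hH₁₁ hH₁₂
  -- the matrix B = M (k₀ - 1)
  have hB := hM (n + 1) (by omega) (by omega) (by omega)
  have hBpd : (M (n + 1)).PosDef := hB.1
  have hBC : M (n + 1) * A = A * M (n + 1) := hB.2
  have hAs : Aᵀ = A := hA.1
  have hBs : (M (n + 1))ᵀ = M (n + 1) := hBpd.1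
  obtain ⟨ha10, ha00, ha11, hadet0⟩ := pd_entries hA
  -- shorthand
  set u : Fin 2 → ℝ := M (n + 1) *ᵥ q with hu_def
  set v : Fin 2 → ℝ := g (n + 2) with hv_def
  -- orthogonality of u and v
  have hgn_ne : g n ≠ 0 := hgne n (by omega)
  have hD : g n ⬝ᵥ (M (n + 1) *ᵥ (A *ᵥ g n)) ≠ 0 := pd_prod_dot hBpd hA hBC hgn_ne
  have hstep1 := hstep (n + 1) (by omega) (by omega) (by omega)
  simp only [Nat.add_sub_cancel] at hstep1
  have hortho : u ⬝ᵥ v = 0 := by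
    have h2 : v = (g n - α n • (A *ᵥ g n)) -
        α (n + 1) • (A *ᵥ (g n - α n • (A *ᵥ g n))) := by
      rw [hv_def, hrec (n + 1), hrec n]
    rw [h2, hu_def, ortho_aux hAs hBs hBC q (g n) (α (n + 1)) (α n) hq, hstep1,
      div_mul_cancel₀ _ hD, sub_self]
  -- u and v are nonzero
  have hune : u ≠ 0 := by
    intro h
    have := pd_dot hBpd hq0
    rw [← hu_def, h] at this
    simp at this
  have hvne : v ≠ 0 := hgne (n + 2) (by omega)
  have huu : u ⬝ᵥ u ≠ 0 := fun h => hune (dotProduct_self_eq_zero.mp h)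
  have hvv : v ⬝ᵥ v ≠ 0 := fun h => hvne (dotProduct_self_eq_zero.mp h)
  have huu' : u ⬝ᵥ u = u 0 ^ 2 + u 1 ^ 2 := by
    simp [dotProduct, Fin.sum_univ_two]; ring
  have hvv' : v ⬝ᵥ v = v 0 ^ 2 + v 1 ^ 2 := by
    simp [dotProduct, Fin.sum_univ_two]; ring
  have huu_nonneg : (0:ℝ) ≤ u ⬝ᵥ u := by rw [huu']; positivity
  have hvv_nonneg : (0:ℝ) ≤ v ⬝ᵥ v := by rw [hvv']; positivity
  have huu_pos : 0 < u ⬝ᵥ u := lt_of_le_of_ne huu_nonneg (Ne.symm huu)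
  have hvv_pos : 0 < v ⬝ᵥ v := lt_of_le_of_ne hvv_nonneg (Ne.symm hvv)
  -- trace and determinant of A
  obtain ⟨t, ht_def⟩ : ∃ t : ℝ, t = A 0 0 + A 1 1 := ⟨_, rfl⟩
  obtain ⟨d, hd_def⟩ : ∃ d : ℝ, d = A 0 0 * A 1 1 - A 0 1 * A 1 0 := ⟨_, rfl⟩
  have htpos : 0 < t := ht_def ▸ add_pos ha00 ha11
  have hdpos : 0 < d := by
    have := hA.det_pos
    rw [Matrix.det_fin_two] at this
    rwa [← hd_def] at this
  have hd' : d = A 0 0 * A 1 1 - A 0 1 ^ 2 := by rw [hd_def, ha10]; ring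
  -- coordinates of quadratic forms
  have hp : u 0 * v 0 + u 1 * v 1 = 0 := by
    have := hortho
    simpa [dotProduct, Fin.sum_univ_two] using this
  have huAu : u ⬝ᵥ (A *ᵥ u) = A 0 0 * u 0 ^ 2 + 2 * A 0 1 * u 0 * u 1 + A 1 1 * u 1 ^ 2 := by
    simp [dotProduct, Matrix.mulVec, Fin.sum_univ_two, ha10]; ring
  have hvAv : v ⬝ᵥ (A *ᵥ v) = A 0 0 * v 0 ^ 2 + 2 * A 0 1 * v 0 * v 1 + A 1 1 * v 1 ^ 2 := by
    simp [dotProduct, Matrix.mulVec, Fin.sum_univ_two, ha10]; ring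
  have huAv : u ⬝ᵥ (A *ᵥ v) = A 0 0 * u 0 * v 0 + A 0 1 * (u 0 * v 1 + u 1 * v 0)
      + A 1 1 * u 1 * v 1 := by
    simp [dotProduct, Matrix.mulVec, Fin.sum_univ_two, ha10]; ring
  -- H₁₁ + H₂₂ = t
  have hHsum : H₁₁ + H₂₂ = t := by
    rw [hH₁₁, hH₂₂, div_add_div _ _ huu hvv,
      div_eq_iff (mul_ne_zero huu hvv), huAu, hvAv, huu', hvv', ht_def]
    linear_combination hsum_aux (A 0 0) (A 0 1) (A 1 1) (u 0) (u 1) (v 0) (v 1) hp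
  -- H₁₁ * H₂₂ - H₁₂ ^ 2 = d
  have hH12sq : H₁₂ ^ 2 = (u ⬝ᵥ (A *ᵥ v)) ^ 2 / ((u ⬝ᵥ u) * (v ⬝ᵥ v)) := by
    rw [hH₁₂, div_pow, mul_pow,
      Real.sq_sqrt huu_pos.le, Real.sq_sqrt hvv_pos.le]
  have hHdet : H₁₁ * H₂₂ - H₁₂ ^ 2 = d := by
    rw [hH₁₁, hH₂₂, hH12sq, div_mul_div_comm,
      div_sub_div _ _ (mul_ne_zero huu hvv) (mul_ne_zero huu hvv), div_eq_iff
        (mul_ne_zero (mul_ne_zero huu hvv) (mul_ne_zero huu hvv))]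
    rw [huAu, hvAv, huAv, huu', hvv', hd']
    have := hdet_aux (A 0 0) (A 0 1) (A 1 1) (u 0) (u 1) (v 0) (v 1) hp
    linear_combination ((u 0 ^ 2 + u 1 ^ 2) * (v 0 ^ 2 + v 1 ^ 2)) * this
  -- the stepsize is the reciprocal of the largest eigenvalue
  have hdisc : (H₁₁ - H₂₂) ^ 2 + 4 * H₁₂ ^ 2 = t ^ 2 - 4 * d := by
    linear_combination (H₁₁ + H₂₂ + t) * hHsum - 4 * hHdet
  have hdisc_eq : t ^ 2 - 4 * d = (A 0 0 - A 1 1) ^ 2 + 4 * A 0 1 ^ 2 := by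
    rw [ht_def, hd']; ring
  have hdisc_nonneg : (0:ℝ) ≤ t ^ 2 - 4 * d := by rw [hdisc_eq]; positivity
  obtain ⟨s, hs_def⟩ : ∃ s : ℝ, s = Real.sqrt (t ^ 2 - 4 * d) := ⟨_, rfl⟩
  have hs_nonneg : 0 ≤ s := hs_def ▸ Real.sqrt_nonneg _
  have hs_sq : s ^ 2 = t ^ 2 - 4 * d := by rw [hs_def]; exact Real.sq_sqrt hdisc_nonneg
  obtain ⟨lam, hlam_def⟩ : ∃ lam : ℝ, lam = (t + s) / 2 := ⟨_, rfl⟩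
  have hts_pos : 0 < t + s := add_pos_of_pos_of_nonneg htpos hs_nonneg
  have hlam_pos : 0 < lam := by rw [hlam_def]; exact div_pos hts_pos two_pos
  have hlam_ne : lam ≠ 0 := ne_of_gt hlam_pos
  have hlam_sq : lam ^ 2 = t * lam - d := by
    rw [hlam_def]; field_simp; linear_combination hs_sq
  have hα : α (n + 2) = 1 / lam := by
    rw [hαk₀, hHsum, hdisc, ← hs_def, hlam_def]
    rw [div_eq_div_iff hts_pos.ne' (div_pos hts_pos two_pos).ne']
    ring
  -- Cayley-Hamilton
  have hCH : ∀ x : Fin 2 → ℝ, A *ᵥ (A *ᵥ x) = t • (A *ᵥ x) - d • x := by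
    intro x
    funext i
    fin_cases i <;>
      simp [Matrix.mulVec, dotProduct, Fin.sum_univ_two, ht_def, hd_def,
        Pi.sub_apply, Pi.smul_apply, smul_eq_mul] <;> ring
  -- g (k₀ + 1) is an eigenvector of A with eigenvalue mu = t - lam
  obtain ⟨mu, hmu_def⟩ : ∃ mu : ℝ, mu = t - lam := ⟨_, rfl⟩
  have hlammu : lam * mu = d := by rw [hmu_def]; linear_combination (-1 : ℝ) * hlam_sq
  have hmu_eq : mu = d / lam := by
    rw [eq_div_iff hlam_ne]; linear_combination hlammu
  have hmu_pos : 0 < mu := hmu_eq ▸ div_pos hdpos hlam_pos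
  have hmu_ne : mu ≠ 0 := ne_of_gt hmu_pos
  have heig : A *ᵥ g (n + 2 + 1) = mu • g (n + 2 + 1) := by
    rw [hrec (n + 2), hα, hmu_def]
    rw [mulVec_sub, mulVec_smul, hCH (g (n + 2))]
    funext i
    simp only [Pi.sub_apply, Pi.smul_apply, smul_eq_mul]
    field_simp
    linear_combination (g (n + 2) i) * hlam_sq
  have heig2 : A *ᵥ g (n + 2 + 2) = mu • g (n + 2 + 2) := by
    have hg2 : g (n + 2 + 2) = (1 - α (n + 2 + 1) * mu) • g (n + 2 + 1) := by
      rw [hrec (n + 2 + 1), heig, smul_smul, sub_smul, one_smul]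
    rw [hg2, mulVec_smul, heig, smul_comm]
  -- the last stepsize
  have hg1ne : g (n + 2 + 1) ≠ 0 := hgne (n + 3) (by omega)
  have hM4 := hM (n + 4) (by omega) (by omega) (by omega)
  have hstep4 := hstep (n + 4) (by omega) (by omega) (by omega)
  have hi4 : n + 4 - 1 = n + 3 := by omega
  rw [hi4] at hstep4
  have hN4 : 0 < g (n + 3) ⬝ᵥ (M (n + 4) *ᵥ g (n + 3)) := pd_dot hM4.1 (by
    simpa using hg1ne)
  have hα4 : α (n + 4) = 1 / mu := by
    have h3 : g (n + 3) = g (n + 2 + 1) := by norm_num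
    rw [hstep4, h3, heig, mulVec_smul, dotProduct_smul, smul_eq_mul]
    rw [← h3, mul_comm, ← div_div, div_self (ne_of_gt hN4), one_div]
  -- conclude
  have : g (n + 2 + 3) = g (n + 2 + 2) - α (n + 2 + 2) • (A *ᵥ g (n + 2 + 2)) := hrec (n + 2 + 2)
  have h42 : n + 2 + 2 = n + 4 := by omega
  rw [show n + 2 + 3 = (n + 2 + 2) + 1 from rfl, hrec (n + 2 + 2), heig2,
    show n + 2 + 2 = n + 4 from by omega, hα4, smul_smul, one_div,
    inv_mul_cancel₀ hmu_ne, one_smul, sub_self]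
end
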